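/- There exist 56 equiangular lines in R^18 with common angle arccos(1/5); that is, there is a set X of 56 unit vectors in R^18 such that |⟨v,w⟩| = 1/5 for all distinct v,w ∈ X. Consequently, the maximum number N(18) of equiangular lines in R^18 satisfies N(18) ≥ 56. -/

import Mathlib

/-- The maximum number `N(d)` of equiangular lines in `ℝ^d`: the supremum of
cardinalities of sets of unit vectors that are pairwise equiangular with some
common angle `arccos α`, `0 < α < 1` (so no two vectors are parallel and the
set represents that many distinct lines through the origin). -/
noncomputable def maxEquiangularLines (d : ℕ) : ℕ :=
  sSup {n : ℕ | ∃ (X : Finset (EuclideanSpace ℝ (Fin d))) (α : ℝ),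
    0 < α ∧ α < 1 ∧ X.card = n ∧ (∀ v ∈ X, ‖v‖ = 1) ∧
    (∀ v ∈ X, ∀ w ∈ X, v ≠ w → |(inner ℝ v w : ℝ)| = α)}


private def Qd : ℤ := 469152751747680

private def Pd : Fin 18 → ℤ := ![93830550349536, 15638425058256, 11170303613040, 8377727709780, 1777093756620, 1015482146640, 657076683120, 1839814712736, 665464896096, 34659630005, 651601044094, 977401566141, 3909606264564, 19646262636, 26489342880, 343785602160, 261512124720, 384945847587840]

private def Wd : Fin 18 → Fin 56 → ℤ :=
  ![![5, 1, 1, 1, 1, 1, 1, (-1), 1, 1, (-1), 1, 1, (-1), 1, 1, 1, 1, (-1), 1, (-1), 1, (-1), 1, 1, 1, 1, (-1), (-1), 1, 1, (-1), 1, 1, (-1), 1, (-1), 1, 1, 1, (-1), 1, (-1), 1, 1, (-1), 1, 1, 1, (-1), (-1), 1, (-1), (-1), (-1), (-1)],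
  ![0, 12, 2, 2, 2, (-3), 2, 3, 2, 2, 3, 2, (-3), 3, 2, 2, 2, (-3), 3, (-3), 3, (-3), (-2), 2, 2, (-3), 2, 3, 3, 2, 2, (-2), 2, (-3), (-2), (-3), (-2), 2, (-3), 2, 3, (-3), 3, (-3), 2, (-2), (-3), 2, (-3), 3, (-2), 2, (-2), (-2), (-2), 3],
  ![0, 0, 14, 2, (-4), 3, 2, 3, (-4), 2, 3, 2, (-3), 3, 2, 2, 2, (-3), (-3), 3, 3, (-3), 4, 2, (-4), 3, 2, 3, 3, 2, (-4), (-2), (-4), (-3), 4, (-3), (-2), 2, 3, 2, (-3), 3, 3, 3, (-4), (-2), (-3), (-4), 3, (-3), 4, (-4), 4, 4, (-2), (-3)],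
  ![0, 0, 0, 16, 3, 3, (-5), 3, (-4), 2, (-4), 2, 4, 3, 2, (-5), (-5), 4, 4, 3, 3, (-3), 4, 2, 3, (-4), 2, (-4), 3, (-5), (-4), 5, 3, 4, 4, (-3), (-2), 2, 3, 2, 4, (-4), 3, 3, (-4), 5, 4, (-4), 3, (-3), (-3), 3, (-3), 4, (-2), (-3)],
  ![0, 0, 0, 0, 33, 9, 9, 9, 4, 6, (-4), (-10), 4, 9, 6, 9, (-7), 4, 4, (-7), (-7), 7, (-4), (-10), 1, 12, 6, 12, 9, 9, (-12), 7, 1, (-12), 12, 7, (-6), 6, 9, (-10), 4, 12, (-7), (-7), 4, 7, 4, 4, (-7), 7, (-1), 1, (-1), (-4), (-6), (-9)],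
  ![0, 0, 0, 0, 0, 42, 9, 9, 15, (-16), 18, 12, 4, 9, (-16), 9, (-7), 4, 15, 4, 15, 7, (-15), 12, 12, 1, (-16), (-10), 9, (-13), (-1), 7, (-10), 10, 1, 7, (-6), (-16), (-2), 12, 15, 1, (-7), 4, 15, 7, (-18), (-7), 4, (-4), (-12), (-10), 10, 7, (-6), 2],
  ![0, 0, 0, 0, 0, 0, 51, 9, 1, (-16), 4, 12, (-10), 9, (-16), (-5), 7, 18, 15, 18, (-13), 7, (-1), 12, (-16), 1, 12, 4, (-19), 1, 13, (-7), (-10), (-4), (-13), 7, 22, 12, (-16), 12, 15, 1, 21, (-10), (-27), (-7), 24, 7, (-10), 10, (-12), (-10), (-18), 21, (-6), (-12)],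
  ![0, 0, 0, 0, 0, 0, 0, 30, 9, 9, 2, (-11), 12, (-4), 9, 6, 12, (-8), (-1), 9, 2, (-5), 8, (-11), (-8), 9, 6, 2, (-1), (-8), (-2), 5, (-5), 15, (-15), (-5), (-6), (-11), (-8), 6, (-1), 9, 2, (-5), (-5), 5, (-5), 12, (-5), (-12), (-6), (-5), 8, 2, 14, (-6)],
  ![0, 0, 0, 0, 0, 0, 0, 0, 47, 17, 6, 17, 6, (-12), 17, (-2), 6, 16, 7, (-13), 16, 5, 4, 17, 6, 7, (-12), 16, (-13), 16, 4, 15, (-15), 5, 5, (-25), 22, 27, (-4), (-22), 7, 7, (-4), 25, (-5), 15, (-5), (-4), (-5), (-16), 2, (-15), (-16), (-4), 12, 12],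
  ![0, 0, 0, 0, 0, 0, 0, 0, 0, 192, 112, 98, 18, (-36), (-90), (-100), 18, (-46), (-26), 102, 48, (-32), 12, (-43), 65, 21, 11, 1, 55, 1, (-35), 45, 49, (-79), (-79), 19, 113, (-13), 35, (-19), 115, 21, (-59), (-113), 79, 45, 79, 35, 79, (-1), 53, (-92), (-48), (-12), 36, (-58)],
  ![0, 0, 0, 0, 0, 0, 0, 0, 0, 0, 40, (-10), 30, 12, 6, (-16), 6, 2, 10, 6, (-12), 28, 24, 11, 11, 15, (-7), 7, 1, (-17), 19, (-21), (-5), (-1), (-1), (-11), (-1), (-7), 29, 11, (-11), (-21), 19, 1, 1, 15, 1, (-19), (-23), 17, 11, 16, 12, (-24), 12, (-22)],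
  ![0, 0, 0, 0, 0, 0, 0, 0, 0, 0, 0, 30, 30, 20, 2, (-4), 14, 6, 10, 2, (-8), (-8), (-4), (-13), (-1), (-5), (-11), (-9), 17, 7, 11, 11, (-17), (-9), (-9), 21, (-9), (-3), (-11), (-21), (-11), 19, 19, 9, 9, (-13), 9, (-11), (-7), (-7), 19, 4, 8, 4, (-4), 10],
  ![0, 0, 0, 0, 0, 0, 0, 0, 0, 0, 0, 0, 0, 16, (-7), 7, (-7), (-9), (-5), (-7), 9, 9, 7, (-7), (-7), (-5), 9, (-9), (-7), 9, 7, 7, 0, 2, 2, 2, 2, (-6), (-8), 8, (-8), (-8), (-8), 8, 8, 10, 8, 3, 1, 1, 3, 3, 1, 3, 1, (-6)],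
  ![0, 0, 0, 0, 0, 0, 0, 0, 0, 0, 0, 0, 0, 0, 199, 57, (-17), 57, 125, 199, 199, 199, 57, 79, (-137), 5, (-137), (-63), 79, 79, (-63), (-63), 136, 62, 62, 62, 62, (-66), 8, 8, 8, 8, 8, 8, 8, (-66), 8, 133, (-9), (-9), 133, 13, (-129), 13, 87, 70],
  ![0, 0, 0, 0, 0, 0, 0, 0, 0, 0, 0, 0, 0, 0, 0, 178, 111, 178, (-67), 0, 0, 0, 178, (-71), 40, (-138), 40, 107, (-71), (-71), 107, 107, 107, 40, 40, 40, 40, (-49), 18, 18, 18, 18, 18, 18, 18, (-49), 18, (-49), 129, 129, (-49), (-120), 58, (-120), (-53), 58],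
  ![0, 0, 0, 0, 0, 0, 0, 0, 0, 0, 0, 0, 0, 0, 0, 0, 46, 0, 46, 0, 0, 0, 0, (-19), 27, 27, 27, (-19), (-19), (-19), (-19), (-19), (-19), 27, 27, 27, 27, 27, (-19), (-19), (-19), (-19), (-19), (-19), (-19), 27, (-19), 27, 27, 27, 27, 8, 8, 8, (-38), 8],
  ![0, 0, 0, 0, 0, 0, 0, 0, 0, 0, 0, 0, 0, 0, 0, 0, 0, 0, 0, 0, 0, 0, 0, 39, 39, 39, 39, 39, 39, 39, 39, 39, 39, 39, 39, 39, 39, (-7), (-7), (-7), (-7), (-7), (-7), (-7), (-7), (-7), (-7), (-7), (-7), (-7), (-7), 32, 32, 32, 32, 32],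
  ![0, 0, 0, 0, 0, 0, 0, 0, 0, 0, 0, 0, 0, 0, 0, 0, 0, 0, 0, 0, 0, 0, 0, 0, 0, 0, 0, 0, 0, 0, 0, 0, 0, 0, 0, 0, 0, 1, 1, 1, 1, 1, 1, 1, 1, 1, 1, 1, 1, 1, 1, 1, 1, 1, 1, 1]]

set_option maxRecDepth 100000

private def gd (i j : Fin 56) : ℤ := ∑ k : Fin 18, Pd k * Wd k i * Wd k j

set_option maxHeartbeats 4000000 in
private lemma key : ∀ i j : Fin 56,
    (if i = j then gd i j = 5 * Qd else (gd i j)^2 = Qd^2) := by decide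

private lemma Pd_pos : ∀ k, 0 < Pd k := by decide

private lemma Qd_pos : (0:ℤ) < Qd := by decide

noncomputable def vvec (a : Fin 56) : EuclideanSpace ℝ (Fin 18) :=
  WithLp.toLp 2 (fun k => (Wd k a : ℝ) * Real.sqrt ((Pd k : ℝ) / (5 * (Qd : ℝ))))

private lemma hQR : (0:ℝ) < 5 * (Qd:ℝ) := by
  have := Qd_pos
  have : (0:ℝ) < (Qd:ℝ) := by exact_mod_cast this
  linarith

private lemma inner_vvec (a b : Fin 56) :
    (inner ℝ (vvec a) (vvec b) : ℝ) = (gd a b : ℝ) / (5 * (Qd:ℝ)) := by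
  have hterm : ∀ k : Fin 18,
      ((Wd k a : ℝ) * Real.sqrt ((Pd k : ℝ) / (5 * (Qd:ℝ)))) *
      ((Wd k b : ℝ) * Real.sqrt ((Pd k : ℝ) / (5 * (Qd:ℝ)))) =
      ((Pd k * Wd k a * Wd k b : ℤ) : ℝ) / (5 * (Qd:ℝ)) := by
    intro k
    have h0 : (0:ℝ) ≤ (Pd k : ℝ) / (5 * (Qd:ℝ)) := by
      apply div_nonneg _ (le_of_lt hQR)
      have := Pd_pos k
      exact_mod_cast le_of_lt this
    have hs := Real.mul_self_sqrt h0
    calc ((Wd k a : ℝ) * Real.sqrt ((Pd k : ℝ) / (5 * (Qd:ℝ)))) *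
        ((Wd k b : ℝ) * Real.sqrt ((Pd k : ℝ) / (5 * (Qd:ℝ))))
        = (Wd k a : ℝ) * (Wd k b : ℝ) *
          (Real.sqrt ((Pd k : ℝ) / (5 * (Qd:ℝ))) * Real.sqrt ((Pd k : ℝ) / (5 * (Qd:ℝ)))) := by ring
      _ = (Wd k a : ℝ) * (Wd k b : ℝ) * ((Pd k : ℝ) / (5 * (Qd:ℝ))) := by rw [hs]
      _ = ((Pd k * Wd k a * Wd k b : ℤ) : ℝ) / (5 * (Qd:ℝ)) := by push_cast; ring
  have : (inner ℝ (vvec a) (vvec b) : ℝ)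
      = ∑ k : Fin 18, ((Pd k * Wd k a * Wd k b : ℤ) : ℝ) / (5 * (Qd:ℝ)) := by
    rw [PiLp.inner_apply]
    simp only [RCLike.inner_apply, conj_trivial]
    exact Finset.sum_congr rfl (fun k _ => by rw [mul_comm]; exact hterm k)
  rw [this, ← Finset.sum_div]
  congr 1
  rw [gd]
  push_cast
  ring

private lemma norm_vvec (a : Fin 56) : ‖vvec a‖ = 1 := by
  have hk := key a a
  rw [if_pos rfl] at hk
  have h1 : (inner ℝ (vvec a) (vvec a) : ℝ) = 1 := by
    rw [inner_vvec, hk]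
    push_cast
    exact div_self (ne_of_gt hQR)
  have h2 : ‖vvec a‖ * ‖vvec a‖ = 1 := by
    rw [← real_inner_self_eq_norm_mul_norm]; exact h1
  rcases mul_self_eq_one_iff.1 h2 with h | h
  · exact h
  · nlinarith [norm_nonneg (vvec a)]

private lemma abs_inner_vvec {a b : Fin 56} (h : a ≠ b) :
    |(inner ℝ (vvec a) (vvec b) : ℝ)| = 1 / 5 := by
  have hk := key a b
  rw [if_neg h] at hk
  have habs : |(gd a b : ℝ)| = (Qd : ℝ) := by
    have : ((gd a b : ℝ))^2 = ((Qd:ℝ))^2 := by exact_mod_cast congrArg (fun z : ℤ => (z : ℝ)) hk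
    have h2 := sq_abs (gd a b : ℝ)
    have h3 := sq_abs (Qd : ℝ)
    have hQ : (0:ℝ) < (Qd:ℝ) := by exact_mod_cast Qd_pos
    nlinarith [abs_nonneg ((gd a b : ℝ)), abs_nonneg ((Qd : ℝ))]
  rw [inner_vvec, abs_div, habs]
  rw [abs_of_pos hQR]
  have hQ : (0:ℝ) < (Qd:ℝ) := by exact_mod_cast Qd_pos
  field_simp

private lemma vvec_inj : Function.Injective vvec := by
  intro a b hab
  by_contra hne
  have h1 := abs_inner_vvec hne
  rw [hab] at h1
  have h2 : (inner ℝ (vvec b) (vvec b) : ℝ) = 1 := by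
    rw [real_inner_self_eq_norm_mul_norm, norm_vvec]; norm_num
  rw [h2] at h1
  norm_num at h1

private lemma card_le_324
    (n : ℕ)
    (h : ∃ (X : Finset (EuclideanSpace ℝ (Fin 18))) (α : ℝ),
      0 < α ∧ α < 1 ∧ X.card = n ∧ (∀ v ∈ X, ‖v‖ = 1) ∧
      (∀ v ∈ X, ∀ w ∈ X, v ≠ w → |(inner ℝ v w : ℝ)| = α)) : n ≤ 324 := by
  obtain ⟨X, α, hα0, hα1, hcard, hunit, hang⟩ := h
  classical
  let u : X → EuclideanSpace ℝ (Fin 18 × Fin 18) :=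
    fun x => WithLp.toLp 2 (fun p : Fin 18 × Fin 18 => (x : EuclideanSpace ℝ (Fin 18)) p.1 * (x : EuclideanSpace ℝ (Fin 18)) p.2)
  have hinner : ∀ x y : X, (inner ℝ (u x) (u y) : ℝ)
      = (inner ℝ (x : EuclideanSpace ℝ (Fin 18)) (y : EuclideanSpace ℝ (Fin 18)) : ℝ)^2 := by
    intro x y
    rw [PiLp.inner_apply, PiLp.inner_apply]
    simp only [RCLike.inner_apply, conj_trivial, u]
    rw [sq, Finset.sum_mul_sum, Fintype.sum_prod_type]
    exact Finset.sum_congr rfl fun i _ => Finset.sum_congr rfl fun j _ => by ring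
  have hgram : ∀ x y : X, (inner ℝ (u x) (u y) : ℝ) = if x = y then 1 else α^2 := by
    intro x y
    rw [hinner]
    by_cases hxy : x = y
    · subst hxy
      rw [if_pos rfl, real_inner_self_eq_norm_mul_norm, hunit x x.2]
      norm_num
    · rw [if_neg hxy]
      have hne : (x : EuclideanSpace ℝ (Fin 18)) ≠ (y : EuclideanSpace ℝ (Fin 18)) :=
        fun hh => hxy (Subtype.ext hh)
      have := hang x x.2 y y.2 hne
      rw [← this, sq_abs]
  have hβ1 : α^2 < 1 := by nlinarith
  have hβ0 : 0 ≤ α^2 := sq_nonneg α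
  have hli : LinearIndependent ℝ u := by
    rw [linearIndependent_iff']
    intro s g hsum w hw
    have hw' : ∀ w' ∈ s, (1 - α^2) * g w' + α^2 * (∑ i ∈ s, g i) = 0 := by
      intro w' hw'
      have h0 : (inner ℝ (∑ i ∈ s, g i • u i) (u w') : ℝ) = 0 := by
        rw [hsum, inner_zero_left]
      rw [sum_inner] at h0
      have : ∀ i ∈ s, (inner ℝ (g i • u i) (u w') : ℝ)
          = α^2 * g i + (if i = w' then (1 - α^2) * g i else 0) := by
        intro i _
        rw [real_inner_smul_left, hgram]
        by_cases hiw : i = w'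
        · subst hiw; simp; ring
        · simp [hiw]; ring
      rw [Finset.sum_congr rfl this, Finset.sum_add_distrib, Finset.sum_ite_eq' s w'] at h0
      rw [if_pos hw'] at h0
      rw [← Finset.mul_sum] at h0
      linarith
    have hT : (∑ i ∈ s, g i) = 0 := by
      have hsum2 : ∑ w' ∈ s, ((1 - α^2) * g w' + α^2 * (∑ i ∈ s, g i)) = 0 :=
        Finset.sum_eq_zero hw'
      rw [Finset.sum_add_distrib, ← Finset.mul_sum, Finset.sum_const, nsmul_eq_mul] at hsum2
      by_contra hT0
      have hpos : (0:ℝ) < (1 - α^2) + (s.card : ℝ) * α^2 := by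
        have : (0:ℝ) ≤ (s.card : ℝ) * α^2 := mul_nonneg (Nat.cast_nonneg _) hβ0
        linarith
      have : ((1 - α^2) + (s.card : ℝ) * α^2) * (∑ i ∈ s, g i) = 0 := by linarith [hsum2]
      exact hT0 (by
        rcases mul_eq_zero.1 this with h | h
        · exact absurd h (ne_of_gt hpos)
        · exact h)
    have := hw' w hw
    rw [hT] at this
    have h1 : (1 - α^2) * g w = 0 := by linarith
    rcases mul_eq_zero.1 h1 with h | h
    · exact absurd h (by intro hh; linarith)
    · exact h
  have hcardle : Fintype.card X ≤ Module.finrank ℝ (EuclideanSpace ℝ (Fin 18 × Fin 18)) :=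
    hli.fintype_card_le_finrank
  rw [Fintype.card_coe, hcard] at hcardle
  rwa [finrank_euclideanSpace, Fintype.card_prod, Fintype.card_fin] at hcardle


/-- There exist 56 equiangular lines in `ℝ^18` with common angle `arccos (1/5)`;
consequently `N(18) ≥ 56`. -/
theorem equiangular_56_lines_dim_18 :
    (∃ X : Finset (EuclideanSpace ℝ (Fin 18)),
      X.card = 56 ∧
      (∀ v ∈ X, ‖v‖ = 1) ∧
      (∀ v ∈ X, ∀ w ∈ X, v ≠ w → |(inner ℝ v w : ℝ)| = 1 / 5)) ∧
    56 ≤ maxEquiangularLines 18 := by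
  classical
  set X : Finset (EuclideanSpace ℝ (Fin 18)) := Finset.image vvec Finset.univ with hX
  have hcard : X.card = 56 := by
    rw [hX, Finset.card_image_of_injective _ vvec_inj, Finset.card_univ, Fintype.card_fin]
  have hunit : ∀ v ∈ X, ‖v‖ = 1 := by
    intro v hv
    obtain ⟨a, -, rfl⟩ := Finset.mem_image.1 hv
    exact norm_vvec a
  have hang : ∀ v ∈ X, ∀ w ∈ X, v ≠ w → |(inner ℝ v w : ℝ)| = 1 / 5 := by
    intro v hv w hw hvw
    obtain ⟨a, -, rfl⟩ := Finset.mem_image.1 hv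
    obtain ⟨b, -, rfl⟩ := Finset.mem_image.1 hw
    exact abs_inner_vvec (fun hab => hvw (by rw [hab]))
  refine ⟨⟨X, hcard, hunit, hang⟩, ?_⟩
  have hmem : 56 ∈ {n : ℕ | ∃ (X : Finset (EuclideanSpace ℝ (Fin 18))) (α : ℝ),
      0 < α ∧ α < 1 ∧ X.card = n ∧ (∀ v ∈ X, ‖v‖ = 1) ∧
      (∀ v ∈ X, ∀ w ∈ X, v ≠ w → |(inner ℝ v w : ℝ)| = α)} :=
    ⟨X, 1/5, by norm_num, by norm_num, hcard, hunit, hang⟩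
  exact le_csSup ⟨324, fun n hn => card_le_324 n hn⟩ hmem
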